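/- arXiv:1107.5730 — 2 statements merged into one kernel-verified Lean document; each statement's English description precedes it below -/
import Mathlib

section
/- (Small-quantile asymptotics of the normalized chi-square.) Fix J ≥ 1 and let ξ_J(p) be the quantile function of (1/J)·χ²_J. Then lim_{p→0⁺} ξ_J(p)/p^{2/J} = (2/J)·Γ(J/2 + 1)^{2/J}, and consequently the diversity power P_J(β) = ∫_0^β ξ_J(p) dp satisfies lim_{β→0⁺} P_J(β)/β^{1+2/J} = (2/(J+2))·Γ(J/2 + 1)^{2/J}. In particular, ξ_J(α) = Θ(α^{−1}·P_J(α)) as α → 0⁺. -/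
open MeasureTheory ProbabilityTheory Real Filter Finset Topology
open scoped ENNReal NNReal

noncomputable section

namespace Sparsity

/-- Binary entropy function (natural logarithms). -/
def Hb (p : ℝ) : ℝ := -(p * Real.log p) - (1 - p) * Real.log (1 - p)

/-- The metric entropy rate `R(κ, α)`. -/
def Rrate (κ α : ℝ) : ℝ :=
  if α < 1 - κ then Hb κ - κ * Hb α - (1 - κ) * Hb (κ * α / (1 - κ)) else 0

/-- The standard gaussian measure on `ℝ`. -/
def stdGaussian : Measure ℝ := gaussianReal 0 1

instance : IsProbabilityMeasure stdGaussian := by unfold stdGaussian; infer_instance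

/-- i.i.d. standard gaussian measure on `ι → ℝ`. -/
def gaussianPi (ι : Type*) [Fintype ι] : Measure (ι → ℝ) := Measure.pi fun _ => stdGaussian

instance (ι : Type*) [Fintype ι] : IsProbabilityMeasure (gaussianPi ι) := by
  unfold gaussianPi; infer_instance

/-- CDF of a normalized chi-square with `J` degrees of freedom,
i.e. the law of `(1/J) ∑_{j<J} U_j^2` with `U_j` i.i.d. standard gaussian. -/
def chiCDF (J : ℕ) (t : ℝ) : ℝ :=
  ((gaussianPi (Fin J)) {u | ∑ j, (u j) ^ 2 ≤ J * t}).toReal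

/-- Quantile function `ξ_J` of the normalized chi-square with `J` degrees of freedom. -/
def xi (J : ℕ) (p : ℝ) : ℝ := sInf {t : ℝ | 0 ≤ t ∧ p ≤ chiCDF J t}

/-- The diversity power `P_J(β) = ∫_0^β ξ_J(p) dp`. -/
def Ppow (J : ℕ) (β : ℝ) : ℝ := ∫ p in (0:ℝ)..β, xi J p

/-- All sparsity patterns: size-`k` subsets of `{1,…,n}`. -/
def patterns (n k : ℕ) : Finset (Finset (Fin n)) := Finset.powersetCard k Finset.univ

/-- The underlying randomness for the joint sparsity model: nonzero values `ω.1`,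
measurement matrices `ω.2.1`, and additive noise `ω.2.2`. -/
abbrev Omega (n m J : ℕ) : Type :=
  (Fin J → Fin n → ℝ) × (Fin J → Fin m → Fin n → ℝ) × (Fin J → Fin m → ℝ)

/-- The law of the randomness: everything i.i.d. standard gaussian. -/
def omegaLaw (n m J : ℕ) : Measure (Omega n m J) :=
  (Measure.pi fun _ : Fin J => gaussianPi (Fin n)).prod
    ((Measure.pi fun _ : Fin J => Measure.pi fun _ : Fin m => gaussianPi (Fin n)).prod
      (Measure.pi fun _ : Fin J => gaussianPi (Fin m)))

/-- The sparse signal with pattern `S` and nonzero values `x`. -/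
def signal (n : ℕ) (S : Finset (Fin n)) (x : Fin n → ℝ) : Fin n → ℝ :=
  fun i => if i ∈ S then x i else 0

/-- The noisy observations `Y_j = √(SNR/k)·A_j X_j + W_j`. -/
def Yobs (n m J : ℕ) (SNR : ℝ) (k : ℕ) (S : Finset (Fin n)) (ω : Omega n m J) :
    Fin J → Fin m → ℝ :=
  fun j r =>
    Real.sqrt (SNR / k) * (∑ i, ω.2.1 j r i * signal n S (ω.1 j) i) + ω.2.2 j r

/-- Normalized distortion `d(S,T) = max(|S∖T|, |T∖S|)/k`. -/
def distor (k : ℕ) {n : ℕ} (S T : Finset (Fin n)) : ℝ :=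
  (max (S \ T).card (T \ S).card : ℝ) / k

/-- A sparsity pattern estimator: a function of the observations `(Y_j)_j`
and of the measurement matrices `(A_j)_j`. -/
abbrev Estimator (n m J : ℕ) : Type :=
  (Fin J → Fin m → ℝ) → (Fin J → Fin m → Fin n → ℝ) → Finset (Fin n)

/-- The probability that the estimator `est` makes distortion larger than `α`,
averaged over the uniformly distributed sparsity pattern. -/
def errProb (n m J k : ℕ) (SNR α : ℝ) (est : Estimator n m J) : ℝ :=
  (n.choose k : ℝ)⁻¹ * ∑ S ∈ patterns n k,
    (omegaLaw n m J
      {ω | α < distor k S (est (Yobs n m J SNR k S ω) ω.2.1)}).toReal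

/-- Distortion `α` is achievable (by some estimator sequence) at sparsity rate `κ`,
signal-to-noise ratio `SNR`, total sampling rate `ρ` and diversity `J`. -/
def achievable (κ SNR ρ : ℝ) (J : ℕ) (α : ℝ) : Prop :=
  ∃ (k m : ℕ → ℕ) (est : ∀ n, Estimator n (m n) J),
    Tendsto (fun n => (k n : ℝ) / n) atTop (𝓝 κ) ∧
    Tendsto (fun n => (J : ℝ) * (m n) / n) atTop (𝓝 ρ) ∧
    Tendsto (fun n => errProb n (m n) J (k n) SNR α (est n)) atTop (𝓝 0)

/-- The infimum total sampling rate at which distortion `α` is achievable. -/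
def rhoStar (κ SNR : ℝ) (J : ℕ) (α : ℝ) : ℝ := sInf {ρ | achievable κ SNR ρ J α}


lemma lintegral_fin_pi_prod : ∀ (n : ℕ) (g : Fin n → ℝ → ℝ≥0∞), (∀ i, Measurable (g i)) →
    ∫⁻ x : Fin n → ℝ, ∏ i, g i (x i) ∂(Measure.pi fun _ => (volume : Measure ℝ))
      = ∏ i, ∫⁻ y, g i y := by
  intro n
  induction n with
  | zero => intro g _; simp
  | succ n ih =>
    intro g hg
    rw [(((measurePreserving_piFinSuccAbove (fun _ : Fin (n+1) => (volume : Measure ℝ))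
      0).symm)).lintegral_map_equiv _]
    simp_rw [MeasurableEquiv.piFinSuccAbove_symm_apply, Fin.insertNthEquiv,
      Fin.prod_univ_succ, Fin.insertNth_zero, Equiv.coe_fn_mk, Fin.cons_succ,
      Fin.cons_zero, cast_eq]
    have h2 : Measurable fun y : Fin n → ℝ => ∏ i : Fin n, g i.succ (y i) :=
      Finset.measurable_prod _ fun i _ => (hg i.succ).comp (measurable_pi_apply i)
    rw [show (∫⁻ (a : ℝ × (Fin n → ℝ)), g 0 a.1 * ∏ x : Fin n, g x.succ (a.2 x)
          ∂(volume : Measure ℝ).prod (Measure.pi fun _ => (volume : Measure ℝ)))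
        = (∫⁻ x, g 0 x) * ∫⁻ y : Fin n → ℝ, ∏ i : Fin n, g i.succ (y i)
          ∂(Measure.pi fun _ => (volume : Measure ℝ))
      from lintegral_prod_mul (hg 0).aemeasurable h2.aemeasurable]
    rw [ih (fun i => g i.succ) (fun i => hg i.succ)]

lemma gaussianPi_fin_eq (J : ℕ) :
    gaussianPi (Fin J) = (Measure.pi fun _ : Fin J => (volume : Measure ℝ)).withDensity
      (fun u => ∏ j, gaussianPDF 0 1 (u j)) := by
  unfold gaussianPi stdGaussian
  apply Measure.pi_eq
  intro s hs
  rw [withDensity_apply _ (MeasurableSet.univ_pi hs)]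
  have hind : ∀ u : Fin J → ℝ,
      (Set.univ.pi s).indicator (fun u : Fin J → ℝ => ∏ j, gaussianPDF 0 1 (u j)) u
      = ∏ j, (s j).indicator (gaussianPDF 0 1) (u j) := by
    intro u
    by_cases h : u ∈ Set.univ.pi s
    · rw [Set.indicator_of_mem h]
      exact Finset.prod_congr rfl fun j _ =>
        (Set.indicator_of_mem (h j (Set.mem_univ j)) _).symm
    · rw [Set.indicator_of_notMem h]
      rw [Set.mem_univ_pi] at h
      push_neg at h
      obtain ⟨j, hj⟩ := h
      exact (Finset.prod_eq_zero (Finset.mem_univ j) (Set.indicator_of_notMem hj _)).symm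
  rw [← lintegral_indicator (MeasurableSet.univ_pi hs)]
  rw [lintegral_congr hind]
  rw [lintegral_fin_pi_prod J _ (fun j => (measurable_gaussianPDF 0 1).indicator (hs j))]
  refine Finset.prod_congr rfl fun j _ => ?_
  rw [lintegral_indicator (hs j)]
  exact (gaussianReal_apply 0 one_ne_zero (s j)).symm


noncomputable def Kc (J : ℕ) : ℝ := ((J:ℝ)/2) ^ ((J:ℝ)/2) / Real.Gamma ((J:ℝ)/2 + 1)

lemma Gamma_half_pos (J : ℕ) : 0 < Real.Gamma ((J:ℝ)/2 + 1) :=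
  Real.Gamma_pos_of_pos (by positivity)

lemma Kc_pos (J : ℕ) (hJ : 1 ≤ J) : 0 < Kc J := by
  have h1 : (0:ℝ) < (J:ℝ) := by exact_mod_cast hJ
  exact div_pos (Real.rpow_pos_of_pos (by positivity) _) (Gamma_half_pos J)

lemma chiCDF_bounds (J : ℕ) (hJ : 1 ≤ J) {t : ℝ} (ht : 0 ≤ t) :
    Real.exp (-((J:ℝ)*t)/2) * (Kc J * t ^ ((J:ℝ)/2)) ≤ chiCDF J t ∧
    chiCDF J t ≤ Kc J * t ^ ((J:ℝ)/2) := by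
  haveI : Nonempty (Fin J) := ⟨⟨0, hJ⟩⟩
  have hJ0 : (0:ℝ) < (J:ℝ) := by exact_mod_cast hJ
  set S : Set (Fin J → ℝ) := {u | ∑ j, (u j)^2 ≤ (J:ℝ)*t} with hSdef
  have hS : MeasurableSet S :=
    measurableSet_le (Finset.measurable_sum _ fun j _ =>
      ((measurable_pi_apply j).pow_const 2)) measurable_const
  -- density formula
  have hdens : ∀ u : Fin J → ℝ, (∏ j, gaussianPDF 0 1 (u j))
      = ENNReal.ofReal ((Real.sqrt (2*π))⁻¹ ^ J * Real.exp (-(∑ j, (u j)^2)/2)) := by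
    intro u
    have h1 : ∀ j : Fin J, gaussianPDF 0 1 (u j)
        = ENNReal.ofReal ((Real.sqrt (2*π))⁻¹ * Real.exp (-(u j)^2/2)) := by
      intro j
      simp [gaussianPDF, gaussianPDFReal]
    simp_rw [h1]
    rw [← ENNReal.ofReal_prod_of_nonneg (fun j _ => by positivity)]
    congr 1
    rw [Finset.prod_mul_distrib, Finset.prod_const, Finset.card_univ, Fintype.card_fin,
      ← Real.exp_sum]
    congr 1
    rw [← Finset.sum_div, ← Finset.sum_neg_distrib]
  -- measure as an integral
  have hμS : (gaussianPi (Fin J)) S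
      = ∫⁻ u in S, ENNReal.ofReal ((Real.sqrt (2*π))⁻¹ ^ J * Real.exp (-(∑ j, (u j)^2)/2))
          ∂(Measure.pi fun _ => (volume : Measure ℝ)) := by
    rw [gaussianPi_fin_eq, withDensity_apply _ hS]
    exact setLIntegral_congr_fun hS (fun u _ => hdens u)
  -- volume of the ball
  have hvol : (Measure.pi fun _ : Fin J => (volume : Measure ℝ)) S
      = ENNReal.ofReal (Real.sqrt ((J:ℝ)*t) ^ J *
          (Real.sqrt π ^ J / Real.Gamma ((J:ℝ)/2 + 1))) := by
    have hset : S = {x : Fin J → ℝ |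
        (∑ i, |x i| ^ (2:ℝ)) ^ (1/(2:ℝ)) ≤ Real.sqrt ((J:ℝ)*t)} := by
      ext u
      have h2 : ∀ i : Fin J, |u i| ^ (2:ℝ) = u i ^ 2 := fun i => by
        rw [show (2:ℝ) = ((2:ℕ):ℝ) by norm_num, Real.rpow_natCast, sq_abs]
      simp only [Set.mem_setOf_eq, h2]
      rw [← Real.sqrt_eq_rpow]
      exact (Real.sqrt_le_sqrt_iff (by positivity)).symm
    rw [hset, ← volume_pi, MeasureTheory.volume_sum_rpow_le (Fin J) one_le_two]
    rw [Fintype.card_fin, ← ENNReal.ofReal_pow (Real.sqrt_nonneg _),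
      ← ENNReal.ofReal_mul (by positivity)]
    congr 1
    have hG : 2 * Real.Gamma (1/2 + 1) = Real.sqrt π := by
      rw [Real.Gamma_add_one (by norm_num), Real.Gamma_one_half_eq]
      ring
    rw [show ((2:ℝ) * Real.Gamma (1 / 2 + 1)) ^ J = Real.sqrt π ^ J by rw [hG]]
  -- constants
  set c2 : ℝ := (Real.sqrt (2*π))⁻¹ ^ J with hc2
  have hc2nn : 0 ≤ c2 := by positivity
  set v : ℝ := Real.sqrt ((J:ℝ)*t) ^ J * (Real.sqrt π ^ J / Real.Gamma ((J:ℝ)/2 + 1)) with hv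
  have hvnn : 0 ≤ v := by
    have := (Gamma_half_pos J).le
    positivity
  -- key algebraic identity
  have hkey : c2 * v = Kc J * t ^ ((J:ℝ)/2) := by
    have hbase : (Real.sqrt (2*π))⁻¹ * (Real.sqrt ((J:ℝ)*t) * Real.sqrt π)
        = Real.sqrt ((J:ℝ)*t/2) := by
      rw [← Real.sqrt_mul (by positivity : (0:ℝ) ≤ (J:ℝ)*t) π]
      rw [← Real.sqrt_inv, ← Real.sqrt_mul (by positivity)]
      congr 1
      field_simp
    have hpow : Real.sqrt ((J:ℝ)*t/2) ^ J = ((J:ℝ)/2) ^ ((J:ℝ)/2) * t ^ ((J:ℝ)/2) := by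
      rw [Real.sqrt_eq_rpow, ← Real.rpow_natCast (((J:ℝ)*t/2) ^ ((1:ℝ)/2)) J,
        ← Real.rpow_mul (by positivity)]
      rw [show (1:ℝ)/2 * (J:ℕ) = (J:ℝ)/2 by push_cast; ring]
      rw [show (J:ℝ)*t/2 = (J:ℝ)/2 * t by ring]
      exact Real.mul_rpow (by positivity) ht
    calc c2 * v
        = ((Real.sqrt (2*π))⁻¹ * (Real.sqrt ((J:ℝ)*t) * Real.sqrt π)) ^ J
            / Real.Gamma ((J:ℝ)/2 + 1) := by
          rw [hc2, hv, mul_pow, mul_pow]; ring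
      _ = Real.sqrt ((J:ℝ)*t/2) ^ J / Real.Gamma ((J:ℝ)/2 + 1) := by rw [hbase]
      _ = Kc J * t ^ ((J:ℝ)/2) := by rw [hpow]; simp only [Kc]; ring
  -- measurability of the density
  have hdmeas : Measurable fun u : Fin J → ℝ =>
      ENNReal.ofReal ((Real.sqrt (2*π))⁻¹ ^ J * Real.exp (-(∑ j, (u j)^2)/2)) := by
    apply Measurable.ennreal_ofReal
    exact measurable_const.mul (Real.measurable_exp.comp
      (((Finset.measurable_sum _ fun j _ =>
        (measurable_pi_apply j).pow_const 2).neg).div_const 2))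
  -- upper bound
  have hupper : (gaussianPi (Fin J)) S
      ≤ ENNReal.ofReal c2 * (Measure.pi fun _ : Fin J => (volume : Measure ℝ)) S := by
    rw [hμS]
    refine le_trans (setLIntegral_mono measurable_const fun u hu => ?_)
      (le_of_eq (setLIntegral_const _ _))
    refine ENNReal.ofReal_le_ofReal ?_
    have hx : (0:ℝ) ≤ ∑ j, (u j)^2 := by positivity
    have hexp : Real.exp (-(∑ j, (u j)^2)/2) ≤ 1 := by
      rw [Real.exp_le_one_iff]; linarith
    calc (Real.sqrt (2*π))⁻¹ ^ J * Real.exp (-(∑ j, (u j)^2)/2)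
        ≤ (Real.sqrt (2*π))⁻¹ ^ J * 1 := by
          exact mul_le_mul_of_nonneg_left hexp (by positivity)
      _ = c2 := by rw [mul_one]
  -- lower bound
  have hlower : ENNReal.ofReal (Real.exp (-((J:ℝ)*t)/2) * c2)
      * (Measure.pi fun _ : Fin J => (volume : Measure ℝ)) S ≤ gaussianPi (Fin J) S := by
    rw [hμS]
    refine le_trans (le_of_eq (setLIntegral_const _ _).symm)
      (setLIntegral_mono hdmeas fun u hu => ?_)
    refine ENNReal.ofReal_le_ofReal ?_
    have hu' : ∑ j, (u j)^2 ≤ (J:ℝ)*t := hu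
    rw [mul_comm (Real.exp _) c2]
    refine mul_le_mul_of_nonneg_left ?_ hc2nn
    exact Real.exp_le_exp.mpr (by linarith)
  have hfin : gaussianPi (Fin J) S ≠ ⊤ := measure_ne_top _ _
  have hchi : chiCDF J t = (gaussianPi (Fin J) S).toReal := by rw [hSdef]; rfl
  constructor
  · rw [hvol, ← ENNReal.ofReal_mul (by positivity)] at hlower
    have h2 := (ENNReal.ofReal_le_iff_le_toReal hfin).mp hlower
    rw [hchi]
    calc Real.exp (-((J:ℝ)*t)/2) * (Kc J * t ^ ((J:ℝ)/2))
        = Real.exp (-((J:ℝ)*t)/2) * c2 * v := by rw [← hkey]; ring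
      _ ≤ _ := h2
  · rw [hvol, ← ENNReal.ofReal_mul hc2nn] at hupper
    have h2 := ENNReal.toReal_le_of_le_ofReal (by positivity) hupper
    rw [hchi, ← hkey]
    exact h2

/-- The limit constant `L = Kc⁻²ᐟᴶ`. -/
noncomputable def Lc (J : ℕ) : ℝ := (Kc J) ^ (-((2:ℝ)/(J:ℝ)))

lemma Lc_pos (J : ℕ) (hJ : 1 ≤ J) : 0 < Lc J := Real.rpow_pos_of_pos (Kc_pos J hJ) _

lemma Lc_eq (J : ℕ) (hJ : 1 ≤ J) :
    Lc J = 2/(J:ℝ) * Real.Gamma ((J:ℝ)/2 + 1) ^ ((2:ℝ)/(J:ℝ)) := by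
  have hΓ := Gamma_half_pos J
  have hJ0 : (0:ℝ) < (J:ℝ) := by exact_mod_cast hJ
  rw [Lc, Real.rpow_neg (Kc_pos J hJ).le]
  simp only [Kc]
  rw [Real.div_rpow (by positivity) hΓ.le, ← Real.rpow_mul (by positivity),
    show (J:ℝ)/2 * (2/(J:ℝ)) = 1 by field_simp, Real.rpow_one, inv_div]
  field_simp

lemma chiCDF_nonneg (J : ℕ) (t : ℝ) : 0 ≤ chiCDF J t := ENNReal.toReal_nonneg

lemma xi_nonneg (J : ℕ) (p : ℝ) : 0 ≤ xi J p :=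
  Real.sInf_nonneg fun _ ht => ht.1

lemma xi_zero (J : ℕ) : xi J 0 = 0 :=
  le_antisymm (csInf_le ⟨0, fun t ht => ht.1⟩ ⟨le_refl 0, chiCDF_nonneg J 0⟩) (xi_nonneg J 0)

/-- Threshold below which the quantile set is nonempty. -/
noncomputable def p0 (J : ℕ) : ℝ := Real.exp (-(J:ℝ)/2) * Kc J

lemma p0_pos (J : ℕ) (hJ : 1 ≤ J) : 0 < p0 J :=
  mul_pos (Real.exp_pos _) (Kc_pos J hJ)

lemma quantile_set_nonempty (J : ℕ) (hJ : 1 ≤ J) {p : ℝ} (hp : p ≤ p0 J) :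
    {t : ℝ | 0 ≤ t ∧ p ≤ chiCDF J t}.Nonempty := by
  refine ⟨1, le_refl (0:ℝ) |>.trans zero_le_one, ?_⟩
  have h := (chiCDF_bounds J hJ (zero_le_one)).1
  simp only [mul_one, Real.one_rpow] at h
  calc p ≤ p0 J := hp
    _ ≤ chiCDF J 1 := h

lemma xi_ge (J : ℕ) (hJ : 1 ≤ J) {p : ℝ} (hp : 0 < p) (hp0 : p ≤ p0 J) :
    Lc J * p ^ ((2:ℝ)/(J:ℝ)) ≤ xi J p := by
  have hJ0 : (0:ℝ) < (J:ℝ) := by exact_mod_cast hJ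
  have hK := Kc_pos J hJ
  refine le_csInf (quantile_set_nonempty J hJ hp0) ?_
  rintro t ⟨ht0, htp⟩
  have h1 : p ≤ Kc J * t ^ ((J:ℝ)/2) := htp.trans (chiCDF_bounds J hJ ht0).2
  have h3 : p / Kc J ≤ t ^ ((J:ℝ)/2) := (div_le_iff₀ hK).mpr (by linarith [mul_comm (Kc J) (t ^ ((J:ℝ)/2))])
  have h4 : (p / Kc J) ^ ((2:ℝ)/(J:ℝ)) ≤ (t ^ ((J:ℝ)/2)) ^ ((2:ℝ)/(J:ℝ)) :=
    Real.rpow_le_rpow (by positivity) h3 (by positivity)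
  rw [← Real.rpow_mul ht0, show (J:ℝ)/2 * ((2:ℝ)/(J:ℝ)) = 1 by field_simp,
    Real.rpow_one, Real.div_rpow hp.le hK.le] at h4
  calc Lc J * p ^ ((2:ℝ)/(J:ℝ))
      = p ^ ((2:ℝ)/(J:ℝ)) / Kc J ^ ((2:ℝ)/(J:ℝ)) := by
        rw [Lc, Real.rpow_neg hK.le]; ring
    _ ≤ t := h4

lemma xi_le_upper (J : ℕ) (hJ : 1 ≤ J) {c : ℝ} (hc : 1 < c) {p : ℝ} (hp : 0 < p)
    (hsmall : c * (Lc J * p ^ ((2:ℝ)/(J:ℝ))) ≤ Real.log c) :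
    xi J p ≤ c * (Lc J * p ^ ((2:ℝ)/(J:ℝ))) := by
  have hJ0 : (0:ℝ) < (J:ℝ) := by exact_mod_cast hJ
  have hK := Kc_pos J hJ
  have hL := Lc_pos J hJ
  set t0 : ℝ := c * (Lc J * p ^ ((2:ℝ)/(J:ℝ))) with ht0def
  have ht0 : 0 ≤ t0 := by positivity
  refine csInf_le ⟨0, fun s hs => hs.1⟩ ⟨ht0, ?_⟩
  -- p ≤ chiCDF J t0
  have hb := (chiCDF_bounds J hJ ht0).1
  refine le_trans ?_ hb
  -- compute Kc J * t0 ^ (J/2)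
  have hpow : t0 ^ ((J:ℝ)/2) = c ^ ((J:ℝ)/2) * ((Kc J)⁻¹ * p) := by
    rw [ht0def, Real.mul_rpow (by positivity) (by positivity),
      Real.mul_rpow hL.le (by positivity)]
    congr 1
    rw [← Real.rpow_mul hp.le, show (2/(J:ℝ)) * ((J:ℝ)/2) = 1 by field_simp, Real.rpow_one]
    rw [Lc, ← Real.rpow_mul hK.le, show -((2:ℝ)/(J:ℝ)) * ((J:ℝ)/2) = -1 by field_simp,
      Real.rpow_neg_one]
  have hKt : Kc J * t0 ^ ((J:ℝ)/2) = c ^ ((J:ℝ)/2) * p := by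
    rw [hpow]; field_simp
  rw [hKt]
  have hc0 : (0:ℝ) < c := lt_trans zero_lt_one hc
  calc p = 1 * p := (one_mul p).symm
    _ ≤ (Real.exp (-((J:ℝ)*t0)/2) * c ^ ((J:ℝ)/2)) * p := by
        refine mul_le_mul_of_nonneg_right ?_ hp.le
        rw [Real.rpow_def_of_pos hc0, ← Real.exp_add]
        have hh : (0:ℝ) ≤ (J:ℝ)/2 * (Real.log c - t0) :=
          mul_nonneg (by positivity) (sub_nonneg.mpr hsmall)
        calc (1:ℝ) = Real.exp 0 := Real.exp_zero.symm
          _ ≤ _ := Real.exp_le_exp.mpr (by nlinarith [hh])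
    _ = Real.exp (-((J:ℝ)*t0)/2) * (c ^ ((J:ℝ)/2) * p) := by ring

lemma xi_mono (J : ℕ) (hJ : 1 ≤ J) {p q : ℝ} (hpq : p ≤ q) (hq0 : q ≤ p0 J) :
    xi J p ≤ xi J q :=
  csInf_le_csInf ⟨0, fun t ht => ht.1⟩ (quantile_set_nonempty J hJ hq0)
    (fun t ht => ⟨ht.1, le_trans hpq ht.2⟩)


end Sparsity

namespace Sparsity

/-- **Small-quantile asymptotics of the normalized chi-square.**
`ξ_J(p) ~ (2/J)·Γ(J/2+1)^{2/J}·p^{2/J}` as `p → 0⁺`, hence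
`P_J(β) ~ (2/(J+2))·Γ(J/2+1)^{2/J}·β^{1+2/J}`, and `ξ_J(α) = Θ(α⁻¹ P_J(α))`. -/
theorem xi_small_quantile_asymptotics (J : ℕ) (hJ : 1 ≤ J) :
    Tendsto (fun p : ℝ => xi J p / p ^ ((2:ℝ) / J)) (𝓝[>] 0)
      (𝓝 ((2 / J) * Real.Gamma ((J : ℝ) / 2 + 1) ^ ((2:ℝ) / J))) ∧
    Tendsto (fun β : ℝ => Ppow J β / β ^ (1 + (2:ℝ) / J)) (𝓝[>] 0)
      (𝓝 ((2 / ((J : ℝ) + 2)) * Real.Gamma ((J : ℝ) / 2 + 1) ^ ((2:ℝ) / J))) ∧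
    ∃ c C : ℝ, 0 < c ∧ c ≤ C ∧ ∀ᶠ α in 𝓝[>] (0:ℝ),
      c * (Ppow J α / α) ≤ xi J α ∧ xi J α ≤ C * (Ppow J α / α) := by
  have hJ0 : (0:ℝ) < (J:ℝ) := by exact_mod_cast hJ
  have hL := Lc_pos J hJ
  have hexp : (0:ℝ) < (2:ℝ)/(J:ℝ) := by positivity
  have hE : (0:ℝ) < 1 + (2:ℝ)/(J:ℝ) := by positivity
  -- eventual lower bound for the quantile
  have hlow : ∀ᶠ p in 𝓝[>] (0:ℝ), Lc J * p ^ ((2:ℝ)/(J:ℝ)) ≤ xi J p := by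
    filter_upwards [Ioo_mem_nhdsGT (p0_pos J hJ)] with p hp
    exact xi_ge J hJ hp.1 hp.2.le
  -- eventual upper bound for the quantile
  have hup : ∀ c : ℝ, 1 < c → ∀ᶠ p in 𝓝[>] (0:ℝ),
      xi J p ≤ c * (Lc J * p ^ ((2:ℝ)/(J:ℝ))) := by
    intro c hc
    have hc0 : (0:ℝ) < c := lt_trans zero_lt_one hc
    have hlog : 0 < Real.log c := Real.log_pos hc
    have hδ : (0:ℝ) < (Real.log c / (c * Lc J)) ^ ((J:ℝ)/2) :=
      Real.rpow_pos_of_pos (by positivity) _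
    filter_upwards [Ioo_mem_nhdsGT hδ] with p hp
    refine xi_le_upper J hJ hc hp.1 ?_
    have h2 : p ^ ((2:ℝ)/(J:ℝ)) ≤ Real.log c / (c * Lc J) := by
      have h3 := Real.rpow_le_rpow hp.1.le hp.2.le hexp.le
      rwa [← Real.rpow_mul (by positivity), show (J:ℝ)/2 * (2/(J:ℝ)) = 1 by field_simp,
        Real.rpow_one] at h3
    calc c * (Lc J * p ^ ((2:ℝ)/(J:ℝ)))
        ≤ c * (Lc J * (Real.log c / (c * Lc J))) :=
          mul_le_mul_of_nonneg_left (mul_le_mul_of_nonneg_left h2 hL.le) hc0.le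
      _ = Real.log c := by field_simp
  -- Part 1
  have hT1 : Tendsto (fun p : ℝ => xi J p / p ^ ((2:ℝ)/(J:ℝ))) (𝓝[>] (0:ℝ)) (𝓝 (Lc J)) := by
    rw [tendsto_order]
    constructor
    · intro a ha
      filter_upwards [hlow, self_mem_nhdsWithin] with p h1 (h2 : 0 < p)
      have hpp : (0:ℝ) < p ^ ((2:ℝ)/(J:ℝ)) := Real.rpow_pos_of_pos h2 _
      have h4 : Lc J ≤ xi J p / p ^ ((2:ℝ)/(J:ℝ)) := (le_div_iff₀ hpp).mpr (by linarith)
      linarith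
    · intro b hb
      set c : ℝ := (Lc J + b) / (2 * Lc J) with hcdef
      have hc1 : 1 < c := by rw [hcdef, lt_div_iff₀ (by positivity)]; linarith
      filter_upwards [hup c hc1, self_mem_nhdsWithin] with p h1 (h2 : 0 < p)
      have hpp : (0:ℝ) < p ^ ((2:ℝ)/(J:ℝ)) := Real.rpow_pos_of_pos h2 _
      have h4 : xi J p / p ^ ((2:ℝ)/(J:ℝ)) ≤ c * Lc J :=
        (div_le_iff₀ hpp).mpr (by rw [mul_assoc]; exact h1)
      have h5 : c * Lc J = (Lc J + b) / 2 := by rw [hcdef]; field_simp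
      linarith
  -- integrability of the quantile
  have hint : ∀ β : ℝ, 0 < β → β ≤ p0 J → IntervalIntegrable (xi J) volume 0 β := by
    intro β hβ hβ0
    refine MonotoneOn.intervalIntegrable ?_
    intro x hx y hy hxy
    rw [Set.uIcc_of_le hβ.le] at hx hy
    exact xi_mono J hJ hxy (hy.2.trans hβ0)
  -- key integral bounds
  have key : ∀ c : ℝ, 1 < c → ∀ᶠ β in 𝓝[>] (0:ℝ),
      Lc J * (β ^ (1 + (2:ℝ)/(J:ℝ)) / (1 + 2/(J:ℝ))) ≤ Ppow J β ∧
      Ppow J β ≤ c * (Lc J * (β ^ (1 + (2:ℝ)/(J:ℝ)) / (1 + 2/(J:ℝ)))) := by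
    intro c hc
    obtain ⟨u, hu, hsub⟩ := mem_nhdsGT_iff_exists_Ioc_subset.mp (hup c hc)
    have hu0 : (0:ℝ) < u := hu
    have hmin : 0 < min u (p0 J) := lt_min hu0 (p0_pos J hJ)
    filter_upwards [Ioo_mem_nhdsGT hmin] with β hβ
    obtain ⟨hβ0, hβlt⟩ := hβ
    have hβp0 : β ≤ p0 J := le_of_lt (lt_of_lt_of_le hβlt (min_le_right _ _))
    have hβu : β ≤ u := le_of_lt (lt_of_lt_of_le hβlt (min_le_left _ _))
    have hintxi := hint β hβ0 hβp0
    have hrint : IntervalIntegrable (fun p : ℝ => p ^ ((2:ℝ)/(J:ℝ))) volume 0 β :=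
      intervalIntegral.intervalIntegrable_rpow (Or.inl hexp.le)
    have hval : (∫ p in (0:ℝ)..β, p ^ ((2:ℝ)/(J:ℝ)))
        = β ^ (1 + (2:ℝ)/(J:ℝ)) / (1 + 2/(J:ℝ)) := by
      rw [integral_rpow (Or.inl (by linarith : (-1:ℝ) < 2/(J:ℝ)))]
      rw [Real.zero_rpow (by positivity : (2:ℝ)/(J:ℝ) + 1 ≠ 0)]
      rw [add_comm ((2:ℝ)/(J:ℝ)) 1]
      ring
    constructor
    · have hpt : ∀ p ∈ Set.Icc (0:ℝ) β, Lc J * p ^ ((2:ℝ)/(J:ℝ)) ≤ xi J p := by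
        intro p hp
        rcases eq_or_lt_of_le hp.1 with h|h
        · simp [← h, Real.zero_rpow hexp.ne', xi_zero]
        · exact xi_ge J hJ h (hp.2.trans hβp0)
      have hmono := intervalIntegral.integral_mono_on hβ0.le (hrint.const_mul (Lc J))
        hintxi hpt
      rwa [intervalIntegral.integral_const_mul, hval] at hmono
    · have hpt : ∀ p ∈ Set.Icc (0:ℝ) β, xi J p ≤ c * (Lc J * p ^ ((2:ℝ)/(J:ℝ))) := by
        intro p hp
        rcases eq_or_lt_of_le hp.1 with h|h
        · simp [← h, Real.zero_rpow hexp.ne', xi_zero]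
        · exact hsub ⟨h, hp.2.trans hβu⟩
      have hmono := intervalIntegral.integral_mono_on hβ0.le hintxi
        ((hrint.const_mul (Lc J)).const_mul c) hpt
      rwa [intervalIntegral.integral_const_mul, intervalIntegral.integral_const_mul,
        hval] at hmono
  -- Part 2
  set M : ℝ := Lc J / (1 + 2/(J:ℝ)) with hMdef
  have hM : 0 < M := by rw [hMdef]; positivity
  have hT2 : Tendsto (fun β : ℝ => Ppow J β / β ^ (1 + (2:ℝ)/(J:ℝ))) (𝓝[>] (0:ℝ))
      (𝓝 M) := by
    rw [tendsto_order]
    constructor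
    · intro a ha
      filter_upwards [key 2 one_lt_two, self_mem_nhdsWithin] with β hk (hβ : 0 < β)
      have hpp : (0:ℝ) < β ^ (1 + (2:ℝ)/(J:ℝ)) := Real.rpow_pos_of_pos hβ _
      have h4 : M ≤ Ppow J β / β ^ (1 + (2:ℝ)/(J:ℝ)) := by
        rw [le_div_iff₀ hpp, hMdef]
        calc Lc J / (1 + 2/(J:ℝ)) * β ^ (1 + (2:ℝ)/(J:ℝ))
            = Lc J * (β ^ (1 + (2:ℝ)/(J:ℝ)) / (1 + 2/(J:ℝ))) := by ring
          _ ≤ Ppow J β := hk.1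
      linarith
    · intro b hb
      set c : ℝ := (M + b) / (2 * M) with hcdef
      have hc1 : 1 < c := by rw [hcdef, lt_div_iff₀ (by positivity)]; linarith
      filter_upwards [key c hc1, self_mem_nhdsWithin] with β hk (hβ : 0 < β)
      have hpp : (0:ℝ) < β ^ (1 + (2:ℝ)/(J:ℝ)) := Real.rpow_pos_of_pos hβ _
      have h4 : Ppow J β / β ^ (1 + (2:ℝ)/(J:ℝ)) ≤ c * M := by
        rw [div_le_iff₀ hpp]
        calc Ppow J β ≤ c * (Lc J * (β ^ (1 + (2:ℝ)/(J:ℝ)) / (1 + 2/(J:ℝ)))) := hk.2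
          _ = c * M * β ^ (1 + (2:ℝ)/(J:ℝ)) := by rw [hMdef]; ring
      have h5 : c * M = (M + b) / 2 := by rw [hcdef]; field_simp
      linarith
  refine ⟨?_, ?_, ?_⟩
  · rw [show (2 / (J:ℝ)) * Real.Gamma ((J : ℝ) / 2 + 1) ^ ((2:ℝ) / J) = Lc J from
      (Lc_eq J hJ).symm]
    exact hT1
  · rw [show (2 / ((J:ℝ) + 2)) * Real.Gamma ((J : ℝ) / 2 + 1) ^ ((2:ℝ) / J) = M by
      rw [hMdef, Lc_eq J hJ]; field_simp]
    exact hT2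
  · -- Part 3
    have hratio : Tendsto (fun α : ℝ => (xi J α / α ^ ((2:ℝ)/(J:ℝ))) /
        (Ppow J α / α ^ (1 + (2:ℝ)/(J:ℝ)))) (𝓝[>] (0:ℝ)) (𝓝 (Lc J / M)) :=
      hT1.div hT2 hM.ne'
    have hLM : Lc J / M = 1 + 2/(J:ℝ) := by
      rw [hMdef]
      field_simp
    rw [hLM] at hratio
    set r : ℝ := 1 + (2:ℝ)/(J:ℝ) with hrdef
    have hr : 0 < r := hE
    refine ⟨r/2, 2*r, by linarith, by linarith, ?_⟩
    have hev1 := hratio.eventually (eventually_gt_nhds (by linarith : r/2 < r))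
    have hev2 := hratio.eventually (eventually_lt_nhds (by linarith : r < 2*r))
    have hev3 := hT2.eventually (eventually_gt_nhds (half_lt_self hM))
    filter_upwards [hev1, hev2, hev3, self_mem_nhdsWithin] with α h1 h2 h3 (hα : 0 < α)
    have hαE : (0:ℝ) < α ^ ((2:ℝ)/(J:ℝ)) := Real.rpow_pos_of_pos hα _
    have hα1E : (0:ℝ) < α ^ (1 + (2:ℝ)/(J:ℝ)) := Real.rpow_pos_of_pos hα _
    have hP : 0 < Ppow J α := by
      have h6 : M/2 * α ^ (1 + (2:ℝ)/(J:ℝ)) < Ppow J α := by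
        rw [← lt_div_iff₀ hα1E]; exact h3
      nlinarith
    have hsplit : α ^ (1 + (2:ℝ)/(J:ℝ)) = α * α ^ ((2:ℝ)/(J:ℝ)) := by
      rw [Real.rpow_add hα, Real.rpow_one]
    have hid : (xi J α / α ^ ((2:ℝ)/(J:ℝ))) / (Ppow J α / α ^ (1 + (2:ℝ)/(J:ℝ)))
        = xi J α * α / Ppow J α := by
      rw [hsplit]; field_simp
    rw [hid] at h1 h2
    constructor
    · have h7 : r/2 * Ppow J α < xi J α * α := (lt_div_iff₀ hP).mp h1
      rw [mul_div_assoc']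
      exact (div_le_iff₀ hα).mpr (by linarith)
    · have h7 : xi J α * α < 2*r * Ppow J α := (div_lt_iff₀ hP).mp h2
      rw [mul_div_assoc']
      exact (le_div_iff₀ hα).mpr (by linarith)


end Sparsity
end
end

section
/- (Small-distortion behavior of the entropy rate.) Fix κ ∈ (0,1/2) and let R(κ,α) = H_b(κ) − κ·H_b(α) − (1−κ)·H_b(κα/(1−κ)). Then lim_{α→0⁺} (H_b(κ) − R(κ,α)) / (α·log(1/α)) = 2κ. -/
open MeasureTheory ProbabilityTheory Real Filter Finset Topology
open scoped ENNReal NNReal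

noncomputable section

namespace Sparsity

private lemma log_one_sub_div (d : ℝ) :
    Tendsto (fun α : ℝ => Real.log (1 - d*α) / α) (𝓝[>] 0) (𝓝 (-d)) := by
  have h2 : HasDerivAt (fun α : ℝ => 1 - d*α) (-d) 0 := by
    simpa [Pi.sub_def] using ((hasDerivAt_const (0:ℝ) (1:ℝ)).sub ((hasDerivAt_id (0:ℝ)).const_mul d))
  have h1 : HasDerivAt (fun α : ℝ => Real.log (1 - d*α)) (-d) 0 := by
    have h3 := (Real.hasDerivAt_log (by norm_num : (1:ℝ) - d*0 ≠ 0)).comp 0 h2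
    simpa [Function.comp_def] using h3
  have h4 := hasDerivAt_iff_tendsto_slope.mp h1
  have h5 : Tendsto (fun α : ℝ => Real.log (1 - d*α) / α) (𝓝[≠] 0) (𝓝 (-d)) := by
    refine h4.congr fun x => ?_
    simp [slope_def_field, div_eq_mul_inv]
  exact h5.mono_left (nhdsWithin_mono _ (fun x hx => ne_of_gt hx))

set_option maxHeartbeats 400000 in
/-- **Small-distortion behavior of the entropy rate.**
`(H_b(κ) − R(κ,α)) / (α log(1/α)) → 2κ` as `α → 0⁺`. -/
theorem entropy_rate_small_distortion (κ : ℝ) (hκ : κ ∈ Set.Ioo 0 (1/2)) :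
    Tendsto (fun α : ℝ => (Hb κ - Rrate κ α) / (α * Real.log (1 / α)))
      (𝓝[>] 0) (𝓝 (2 * κ)) := by
  obtain ⟨hκ0, hκ2⟩ := hκ
  have h1κ : 0 < 1 - κ := by linarith
  obtain ⟨c, hc⟩ : ∃ c : ℝ, c = κ / (1 - κ) := ⟨_, rfl⟩
  have hc0 : 0 < c := hc ▸ div_pos hκ0 h1κ
  have hκc : (1 - κ) * c = κ := by rw [hc]; field_simp
  -- limits of building blocks
  have hlog0 : Tendsto (fun α : ℝ => (Real.log α)⁻¹) (𝓝[>] (0:ℝ)) (𝓝 0) := by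
    have h := tendsto_inv_atTop_zero.comp
      (tendsto_neg_atBot_atTop.comp Real.tendsto_log_nhdsGT_zero)
    have h2 := h.neg
    simpa [Function.comp, inv_neg] using h2
  have hA : Tendsto (fun α : ℝ => (1 - α) * (Real.log (1 - α) / α)) (𝓝[>] (0:ℝ))
      (𝓝 (-1)) := by
    have h1 : Tendsto (fun α : ℝ => (1 : ℝ) - α) (𝓝[>] (0:ℝ)) (𝓝 1) := by
      have h0 : Tendsto (fun α : ℝ => (1 : ℝ) - α) (𝓝 (0:ℝ)) (𝓝 (1 - 0)) :=
        tendsto_const_nhds.sub tendsto_id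
      simpa using h0.mono_left nhdsWithin_le_nhds
    have h2 := log_one_sub_div 1
    have := h1.mul h2
    simpa using this
  have hB : Tendsto (fun α : ℝ => (1 - c*α) * (Real.log (1 - c*α) / α)) (𝓝[>] (0:ℝ))
      (𝓝 (-c)) := by
    have h1 : Tendsto (fun α : ℝ => (1 : ℝ) - c*α) (𝓝[>] (0:ℝ)) (𝓝 1) := by
      have h0 : Tendsto (fun α : ℝ => (1 : ℝ) - c*α) (𝓝 (0:ℝ)) (𝓝 (1 - c*0)) :=
        tendsto_const_nhds.sub (tendsto_id.const_mul c)
      simpa using h0.mono_left nhdsWithin_le_nhds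
    have := h1.mul (log_one_sub_div c)
    simpa using this
  -- the model function G
  have hG : Tendsto (fun α : ℝ =>
      κ + κ * ((1 - α) * (Real.log (1 - α) / α)) * (Real.log α)⁻¹
        + (1 - κ) * c * (Real.log c * (Real.log α)⁻¹ + 1)
        + (1 - κ) * ((1 - c*α) * (Real.log (1 - c*α) / α)) * (Real.log α)⁻¹)
      (𝓝[>] (0:ℝ))
      (𝓝 (κ + κ * (-1) * 0 + (1 - κ) * c * (Real.log c * 0 + 1) + (1 - κ) * (-c) * 0)) := by
    exact (((tendsto_const_nhds.add ((tendsto_const_nhds.mul hA).mul hlog0)).add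
      (tendsto_const_nhds.mul ((tendsto_const_nhds.mul hlog0).add tendsto_const_nhds))).add
      ((tendsto_const_nhds.mul hB).mul hlog0))
  have hval : κ + κ * (-1) * 0 + (1 - κ) * c * (Real.log c * 0 + 1) + (1 - κ) * (-c) * 0
      = 2 * κ := by linear_combination hκc
  rw [hval] at hG
  refine hG.congr' ?_
  filter_upwards [Ioo_mem_nhdsGT_of_mem (by constructor <;> norm_num :
      (0:ℝ) ∈ Set.Ico (0:ℝ) (1/2))] with α hα
  obtain ⟨hα0, hα1⟩ := hα
  have hαlt : α < 1 - κ := by linarith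
  have hlogα : Real.log α < 0 := Real.log_neg hα0 (by linarith)
  have hlogα' : Real.log α ≠ 0 := ne_of_lt hlogα
  have hα0' : α ≠ 0 := ne_of_gt hα0
  have h1κ' : (1 - κ : ℝ) ≠ 0 := ne_of_gt h1κ
  have hced : κ * α / (1 - κ) = c * α := by
    rw [hc]; ring
  have hlogc : Real.log (c * α) = Real.log c + Real.log α :=
    Real.log_mul (ne_of_gt hc0) hα0'
  have hR : Rrate κ α = Hb κ - κ * Hb α - (1 - κ) * Hb (c * α) := by
    rw [Rrate, if_pos hαlt, hced]
  rw [hR]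
  simp only [Hb, hlogc]
  rw [one_div, Real.log_inv]
  field_simp [hα0', hlogα']
  ring

end Sparsity
end
end
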